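/- Let Φ be a reduced irreducible root system in ℝ^d with d ≥ 2, and let L ⊆ ℂ^d be a 2-dimensional ℂ-linear subspace such that L ⊄ ker θ_ℂ for every θ ∈ Φ. Then for every θ ∈ Φ the subspace l_θ := ker θ_ℂ ∩ L is 1-dimensional, and the number s of distinct lines occurring among {l_θ : θ ∈ Φ} satisfies 3 ≤ s ≤ (1/2)·#Φ. -/
import Mathlib


noncomputable section

/-- The standard inner product on `ℝ^d`. -/
def dotR {d : ℕ} (x y : Fin d → ℝ) : ℝ := ∑ i, x i * y i

/-- `Φ` is a root system in `ℝ^d`: a finite set of nonzero vectors spanning `ℝ^d`,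
closed under the reflections `s_α`, with integral Cartan numbers. -/
def IsRootSystem {d : ℕ} (Φ : Finset (Fin d → ℝ)) : Prop :=
  (∀ α ∈ Φ, α ≠ 0) ∧
  Submodule.span ℝ (Φ : Set (Fin d → ℝ)) = ⊤ ∧
  (∀ α ∈ Φ, ∀ β ∈ Φ, β - (2 * dotR β α / dotR α α) • α ∈ Φ) ∧
  (∀ α ∈ Φ, ∀ β ∈ Φ, ∃ n : ℤ, 2 * dotR β α / dotR α α = (n : ℝ))

/-- `Φ` is reduced: the only multiples of a root `α` in `Φ` are `±α`. -/
def IsReducedRS {d : ℕ} (Φ : Finset (Fin d → ℝ)) : Prop :=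
  ∀ α ∈ Φ, ∀ t : ℝ, t • α ∈ Φ → t = 1 ∨ t = -1

/-- `Φ` is irreducible: it is not the disjoint union of two nonempty mutually
orthogonal subsets. -/
def IsIrreducibleRS {d : ℕ} (Φ : Finset (Fin d → ℝ)) : Prop :=
  ∀ A B : Set (Fin d → ℝ), (Φ : Set (Fin d → ℝ)) = A ∪ B → Disjoint A B →
    (∀ a ∈ A, ∀ b ∈ B, dotR a b = 0) → A = ∅ ∨ B = ∅

/-- The complexification `θ_ℂ : ℂ^d → ℂ` of the linear functional `z ↦ Σ θᵢ zᵢ`. -/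
def thetaC {d : ℕ} (θ : Fin d → ℝ) (z : Fin d → ℂ) : ℂ := ∑ i, (θ i : ℂ) * z i

/-- The kernel of `θ_ℂ`, as a complex subspace of `ℂ^d`. -/
def kerC {d : ℕ} (θ : Fin d → ℝ) : Submodule ℂ (Fin d → ℂ) where
  carrier := {z | thetaC θ z = 0}
  add_mem' := by
    intro a b ha hb
    simp only [Set.mem_setOf_eq, thetaC] at *
    simp [Pi.add_apply, mul_add, Finset.sum_add_distrib, ha, hb]
  zero_mem' := by simp [thetaC]
  smul_mem' := by
    intro c z hz
    simp only [Set.mem_setOf_eq, thetaC] at *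
    have h : ∑ i, (θ i : ℂ) * (c • z) i = c * ∑ i, (θ i : ℂ) * z i := by
      rw [Finset.mul_sum]
      exact Finset.sum_congr rfl (fun i _ => by simp [Pi.smul_apply, smul_eq_mul]; ring)
    rw [h, hz, mul_zero]

namespace Stmt0Aux
open Module

variable {d : ℕ}

lemma mem_kerC (θ : Fin d → ℝ) (z : Fin d → ℂ) : z ∈ kerC θ ↔ thetaC θ z = 0 := Iff.rfl

lemma dotR_comm (x y : Fin d → ℝ) : dotR x y = dotR y x := by
  simp [dotR, mul_comm]

lemma dotR_self_pos {x : Fin d → ℝ} (hx : x ≠ 0) : 0 < dotR x x := by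
  obtain ⟨i, hi⟩ : ∃ i, x i ≠ 0 := by
    by_contra h; push_neg at h; exact hx (funext h)
  have h1 : (0:ℝ) < x i * x i := mul_self_pos.mpr hi
  have h2 : x i * x i ≤ ∑ j, x j * x j :=
    Finset.single_le_sum (f := fun j => x j * x j) (fun j _ => mul_self_nonneg _)
      (Finset.mem_univ i)
  simpa [dotR] using h1.trans_le h2

lemma dotR_self_ne {x : Fin d → ℝ} (hx : x ≠ 0) : dotR x x ≠ 0 := (dotR_self_pos hx).ne'

lemma thetaC_sub_smul (β α : Fin d → ℝ) (c : ℝ) (z : Fin d → ℂ) :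
    thetaC (β - c • α) z = thetaC β z - (c : ℂ) * thetaC α z := by
  simp only [thetaC, Finset.mul_sum, ← Finset.sum_sub_distrib]
  refine Finset.sum_congr rfl fun i _ => ?_
  simp [Pi.sub_apply, Pi.smul_apply, smul_eq_mul]
  ring

lemma kerC_neg (θ : Fin d → ℝ) : kerC (-θ) = kerC θ := by
  ext z
  simp only [mem_kerC, thetaC, Pi.neg_apply, Complex.ofReal_neg, neg_mul,
    Finset.sum_neg_distrib, neg_eq_zero]

/-- `thetaC θ` as a linear map. -/
def thetaLM (θ : Fin d → ℝ) : (Fin d → ℂ) →ₗ[ℂ] ℂ where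
  toFun := thetaC θ
  map_add' a b := by
    simp [thetaC, Pi.add_apply, mul_add, Finset.sum_add_distrib]
  map_smul' c z := by
    simp only [thetaC, Pi.smul_apply, smul_eq_mul, RingHom.id_apply, Finset.mul_sum]
    exact Finset.sum_congr rfl fun i _ => by ring

lemma kerC_eq_ker (θ : Fin d → ℝ) : kerC θ = LinearMap.ker (thetaLM θ) := by
  ext z; rfl

lemma finrank_kerC (θ : Fin d → ℝ) (hθ : θ ≠ 0) :
    Module.finrank ℂ (kerC θ) = d - 1 := by
  have hz : thetaC θ (fun i => (θ i : ℂ)) ≠ 0 := by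
    have : thetaC θ (fun i => (θ i : ℂ)) = ((dotR θ θ : ℝ) : ℂ) := by
      simp [thetaC, dotR]
    rw [this]
    exact_mod_cast dotR_self_ne hθ
  have hrange : LinearMap.range (thetaLM θ) ≠ ⊥ := by
    rw [Submodule.ne_bot_iff]
    exact ⟨thetaC θ (fun i => (θ i : ℂ)), LinearMap.mem_range_self _ _, hz⟩
  have h1 : Module.finrank ℂ (LinearMap.range (thetaLM θ)) = 1 := by
    have hle : Module.finrank ℂ (LinearMap.range (thetaLM θ)) ≤ 1 := by
      simpa using Submodule.finrank_le (LinearMap.range (thetaLM θ))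
    have hpos : 0 < Module.finrank ℂ (LinearMap.range (thetaLM θ)) := by
      rw [Module.finrank_pos_iff]
      exact Submodule.nontrivial_iff_ne_bot.mpr hrange
    omega
  have h2 := LinearMap.finrank_range_add_finrank_ker (thetaLM θ)
  rw [h1] at h2
  have h3 : Module.finrank ℂ (Fin d → ℂ) = d := by simp
  rw [kerC_eq_ker]
  omega

end Stmt0Aux
namespace Stmt0Aux

lemma finrank_inf_eq_one {d : ℕ} (hd : 2 ≤ d) (θ : Fin d → ℝ) (hθ : θ ≠ 0)
    (L : Submodule ℂ (Fin d → ℂ)) (hL : Module.finrank ℂ L = 2)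
    (hLk : ¬ L ≤ kerC θ) : Module.finrank ℂ ↥(kerC θ ⊓ L) = 1 := by
  have hK := finrank_kerC θ hθ
  have hsum := Submodule.finrank_sup_add_finrank_inf_eq (kerC θ) L
  have hsup : Module.finrank ℂ ↥(kerC θ ⊔ L) ≤ d := by
    have := Submodule.finrank_le (kerC θ ⊔ L)
    simpa using this
  have hlt : kerC θ ⊓ L < L := lt_of_le_of_ne inf_le_right (by
    intro h
    exact hLk (by rw [← h]; exact inf_le_left))
  have hup : Module.finrank ℂ ↥(kerC θ ⊓ L) < 2 := by
    rw [← hL]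
    exact Submodule.finrank_lt_finrank_of_lt hlt
  omega

lemma span_singleton_eq {M : Type*} [AddCommGroup M] [Module ℂ M]
    {v : M} (hv : v ≠ 0) {l : Submodule ℂ M} [FiniteDimensional ℂ l]
    (hmem : v ∈ l) (h1 : Module.finrank ℂ l = 1) :
    Submodule.span ℂ {v} = l := by
  apply Submodule.eq_of_le_of_finrank_eq
  · rwa [Submodule.span_singleton_le_iff_mem]
  · rw [finrank_span_singleton hv, h1]

lemma line_unique {M : Type*} [AddCommGroup M] [Module ℂ M]
    {v : M} (hv : v ≠ 0) {l₁ l₂ : Submodule ℂ M}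
    [FiniteDimensional ℂ l₁] [FiniteDimensional ℂ l₂]
    (h1 : Module.finrank ℂ l₁ = 1) (h2 : Module.finrank ℂ l₂ = 1)
    (m1 : v ∈ l₁) (m2 : v ∈ l₂) : l₁ = l₂ := by
  rw [← span_singleton_eq hv m1 h1, ← span_singleton_eq hv m2 h2]

/-- `x ↦ dotR x a` as a linear map. -/
def dotLM {d : ℕ} (a : Fin d → ℝ) : (Fin d → ℝ) →ₗ[ℝ] ℝ where
  toFun x := dotR x a
  map_add' x y := by simp [dotR, add_mul, Finset.sum_add_distrib]
  map_smul' c x := by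
    simp only [dotR, Pi.smul_apply, smul_eq_mul, RingHom.id_apply, Finset.mul_sum]
    exact Finset.sum_congr rfl fun i _ => by ring

lemma eq_zero_of_ortho {d : ℕ} {Φ : Finset (Fin d → ℝ)}
    (hspan : Submodule.span ℝ (Φ : Set (Fin d → ℝ)) = ⊤)
    {a : Fin d → ℝ} (h : ∀ θ ∈ Φ, dotR θ a = 0) : a = 0 := by
  have hle : Submodule.span ℝ (Φ : Set (Fin d → ℝ)) ≤ LinearMap.ker (dotLM a) :=
    Submodule.span_le.mpr fun θ hθ => h θ (by exact_mod_cast hθ)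
  rw [hspan, top_le_iff] at hle
  have ha : dotR a a = 0 := by
    have : a ∈ LinearMap.ker (dotLM a) := hle ▸ Submodule.mem_top
    exact this
  by_contra hne
  exact dotR_self_ne hne ha

lemma neg_mem_of_mem {d : ℕ} {Φ : Finset (Fin d → ℝ)} (hRS : IsRootSystem Φ)
    {θ : Fin d → ℝ} (hθ : θ ∈ Φ) : -θ ∈ Φ := by
  have h := hRS.2.2.1 θ hθ θ hθ
  have hne := dotR_self_ne (hRS.1 θ hθ)
  have hc : 2 * dotR θ θ / dotR θ θ = 2 := by field_simp
  rw [hc] at h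
  have : θ - (2:ℝ) • θ = -θ := by funext i; simp; ring
  rwa [this] at h

end Stmt0Aux
namespace Stmt0Aux

lemma dot_re_im {d : ℕ} (θ : Fin d → ℝ) (v : Fin d → ℂ) (h : thetaC θ v = 0) :
    dotR θ (fun i => (v i).re) = 0 ∧ dotR θ (fun i => (v i).im) = 0 := by
  have hre := congrArg Complex.re h
  have him := congrArg Complex.im h
  simp only [thetaC, Complex.re_sum, Complex.im_sum, Complex.mul_re, Complex.mul_im,
    Complex.ofReal_re, Complex.ofReal_im, Complex.zero_re, Complex.zero_im,
    zero_mul, mul_zero, sub_zero, add_zero, zero_add] at hre him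
  exact ⟨by simpa [dotR] using hre, by simpa [dotR] using him⟩

end Stmt0Aux

open Stmt0Aux in
/-- For a reduced irreducible root system `Φ` in `ℝ^d` (`d ≥ 2`) and a
2-dimensional complex subspace `L ⊆ ℂ^d` not contained in any `ker θ_ℂ`, every
`l_θ := ker θ_ℂ ⊓ L` is a line, and the number `s` of distinct such lines satisfies
`3 ≤ s ≤ (1/2)·#Φ`. -/
theorem stmt0 {d : ℕ} (hd : 2 ≤ d) (Φ : Finset (Fin d → ℝ))
    (hRS : IsRootSystem Φ) (hred : IsReducedRS Φ) (hirr : IsIrreducibleRS Φ)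
    (L : Submodule ℂ (Fin d → ℂ)) (hL : Module.finrank ℂ L = 2)
    (hLk : ∀ θ ∈ Φ, ¬ L ≤ kerC θ) :
    (∀ θ ∈ Φ, Module.finrank ℂ ↥(kerC θ ⊓ L) = 1) ∧
    3 ≤ {l : Submodule ℂ (Fin d → ℂ) | ∃ θ ∈ Φ, l = kerC θ ⊓ L}.ncard ∧
    2 * {l : Submodule ℂ (Fin d → ℂ) | ∃ θ ∈ Φ, l = kerC θ ⊓ L}.ncard ≤ Φ.card := by
  classical
  have hnegmem : ∀ θ ∈ Φ, -θ ∈ Φ := fun θ hθ => neg_mem_of_mem hRS hθ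
  obtain ⟨hne0, hspan, hrefl, -⟩ := hRS
  set f : (Fin d → ℝ) → Submodule ℂ (Fin d → ℂ) := fun θ => kerC θ ⊓ L with hf
  have hfin : ∀ θ ∈ Φ, Module.finrank ℂ ↥(f θ) = 1 := fun θ hθ =>
    finrank_inf_eq_one hd θ (hne0 θ hθ) L hL (hLk θ hθ)
  have hSeq : {l : Submodule ℂ (Fin d → ℂ) | ∃ θ ∈ Φ, l = kerC θ ⊓ L} = ↑(Φ.image f) := by
    ext l; simp [hf, eq_comm]
  have hncard : {l : Submodule ℂ (Fin d → ℂ) | ∃ θ ∈ Φ, l = kerC θ ⊓ L}.ncard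
      = (Φ.image f).card := by rw [hSeq, Set.ncard_coe_finset]
  refine ⟨hfin, ?_, ?_⟩
  · -- lower bound: at least 3 lines
    rw [hncard]
    by_contra hlt
    push_neg at hlt
    have hΦne : Φ.Nonempty := by
      rcases Φ.eq_empty_or_nonempty with h | h
      · exfalso
        have h1 : (fun _ => (1:ℝ)) ∈ Submodule.span ℝ ((Φ : Set (Fin d → ℝ))) := by
          rw [hspan]; trivial
        rw [h, Finset.coe_empty, Submodule.span_empty, Submodule.mem_bot] at h1
        have := congrFun h1 ⟨0, by omega⟩
        simp at this
      · exact h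
    have hine : (Φ.image f).Nonempty := hΦne.image f
    have hkey : ∀ θ ∈ Φ, f θ ∈ Φ.image f := fun θ hθ => Finset.mem_image_of_mem f hθ
    -- nonzero vector in each line
    have hvec : ∀ θ ∈ Φ, ∃ v ∈ f θ, v ≠ 0 := by
      intro θ hθ
      apply (Submodule.ne_bot_iff _).mp
      intro hb
      have := hfin θ hθ
      rw [hb] at this
      simp at this
    have hcases : (Φ.image f).card = 1 ∨ (Φ.image f).card = 2 := by
      have := Finset.Nonempty.card_pos hine; omega
    -- a root's kernel contains a vector of its line
    have hker : ∀ θ ∈ Φ, ∀ v ∈ f θ, thetaC θ v = 0 := by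
      intro θ hθ v hv
      exact (mem_kerC θ v).mp (Submodule.mem_inf.mp hv).1
    rcases hcases with h1 | h2
    · -- one line: a common nonzero kernel vector for all roots
      obtain ⟨l, hl⟩ := Finset.card_eq_one.mp h1
      obtain ⟨θ₀, hθ₀⟩ := hΦne
      have hfl : ∀ θ ∈ Φ, f θ = l := by
        intro θ hθ
        have := hkey θ hθ
        rw [hl, Finset.mem_singleton] at this
        exact this
      obtain ⟨v, hv, hvne⟩ := hvec θ₀ hθ₀
      have hvall : ∀ θ ∈ Φ, thetaC θ v = 0 := by
        intro θ hθ
        exact hker θ hθ v (by rw [hfl θ hθ, ← hfl θ₀ hθ₀]; exact hv)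
      have hre : (fun i => (v i).re) = 0 :=
        eq_zero_of_ortho hspan fun θ hθ => (dot_re_im θ v (hvall θ hθ)).1
      have him : (fun i => (v i).im) = 0 :=
        eq_zero_of_ortho hspan fun θ hθ => (dot_re_im θ v (hvall θ hθ)).2
      apply hvne
      funext i
      have h1 := congrFun hre i
      have h2 := congrFun him i
      simp only [Pi.zero_apply] at h1 h2
      exact Complex.ext h1 h2
    · -- two lines: contradicts irreducibility
      obtain ⟨l₁, l₂, hl12, hl⟩ := Finset.card_eq_two.mp h2
      obtain ⟨θ₁, hθ₁, hfθ₁⟩ := Finset.mem_image.mp (hl ▸ (by simp : l₁ ∈ ({l₁, l₂} : Finset _)))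
      obtain ⟨θ₂, hθ₂, hfθ₂⟩ := Finset.mem_image.mp (hl ▸ (by simp : l₂ ∈ ({l₁, l₂} : Finset _)))
      have hr₁ : Module.finrank ℂ ↥l₁ = 1 := hfθ₁ ▸ hfin θ₁ hθ₁
      have hr₂ : Module.finrank ℂ ↥l₂ = 1 := hfθ₂ ▸ hfin θ₂ hθ₂
      obtain ⟨v₁, hv₁, hv₁ne⟩ : ∃ v ∈ l₁, v ≠ 0 := hfθ₁ ▸ hvec θ₁ hθ₁
      obtain ⟨v₂, hv₂, hv₂ne⟩ : ∃ v ∈ l₂, v ≠ 0 := hfθ₂ ▸ hvec θ₂ hθ₂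
      have hv₁L : v₁ ∈ L := by rw [← hfθ₁] at hv₁; exact (Submodule.mem_inf.mp hv₁).2
      have hv₂L : v₂ ∈ L := by rw [← hfθ₂] at hv₂; exact (Submodule.mem_inf.mp hv₂).2
      have htwo : ∀ θ ∈ Φ, f θ = l₁ ∨ f θ = l₂ := by
        intro θ hθ
        have := hkey θ hθ
        rw [hl] at this
        simpa using this
      -- vanishing and nonvanishing facts
      have hvan₁ : ∀ θ ∈ Φ, f θ = l₁ → thetaC θ v₁ = 0 := fun θ hθ he =>
        hker θ hθ v₁ (he ▸ hv₁)
      have hvan₂ : ∀ θ ∈ Φ, f θ = l₂ → thetaC θ v₂ = 0 := fun θ hθ he =>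
        hker θ hθ v₂ (he ▸ hv₂)
      have hnv₁ : ∀ θ ∈ Φ, f θ = l₁ → thetaC θ v₂ ≠ 0 := by
        intro θ hθ he h0
        have hm : v₂ ∈ f θ := ⟨(mem_kerC θ v₂).mpr h0, hv₂L⟩
        rw [he] at hm
        exact hl12 (line_unique hv₂ne hr₁ hr₂ hm hv₂)
      have hnv₂ : ∀ θ ∈ Φ, f θ = l₂ → thetaC θ v₁ ≠ 0 := by
        intro θ hθ he h0
        have hm : v₁ ∈ f θ := ⟨(mem_kerC θ v₁).mpr h0, hv₁L⟩
        rw [he] at hm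
        exact hl12 (line_unique hv₁ne hr₁ hr₂ hv₁ hm)
      -- orthogonality between the two families
      have horth : ∀ α ∈ Φ, f α = l₁ → ∀ β ∈ Φ, f β = l₂ → dotR β α = 0 := by
        intro α hα heα β hβ heβ
        set c : ℝ := 2 * dotR β α / dotR α α with hc
        have hγ : β - c • α ∈ Φ := hrefl α hα β hβ
        have hγ₁ : thetaC (β - c • α) v₁ = thetaC β v₁ := by
          rw [thetaC_sub_smul, hvan₁ α hα heα, mul_zero, sub_zero]
        rcases htwo _ hγ with he | he
        · exact absurd (hγ₁ ▸ hvan₁ _ hγ he) (hnv₂ β hβ heβ)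
        · have h0 : thetaC (β - c • α) v₂ = 0 := hvan₂ _ hγ he
          rw [thetaC_sub_smul, hvan₂ β hβ heβ, zero_sub, neg_eq_zero] at h0
          have hcα : thetaC α v₂ ≠ 0 := hnv₁ α hα heα
          have hc0 : (c : ℂ) = 0 := by
            rcases mul_eq_zero.mp h0 with h | h
            · exact h
            · exact absurd h hcα
          have hcr : c = 0 := by exact_mod_cast hc0
          rw [hc, div_eq_zero_iff] at hcr
          rcases hcr with h | h
          · linarith
          · exact absurd h (dotR_self_ne (hne0 α hα))
      -- apply irreducibility
      set A : Set (Fin d → ℝ) := {θ | θ ∈ Φ ∧ f θ = l₁} with hA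
      set B : Set (Fin d → ℝ) := {θ | θ ∈ Φ ∧ f θ = l₂} with hB
      have hcover : (Φ : Set (Fin d → ℝ)) = A ∪ B := by
        ext x
        constructor
        · intro hx
          rcases htwo x hx with h | h
          · exact Or.inl ⟨hx, h⟩
          · exact Or.inr ⟨hx, h⟩
        · rintro (⟨hx, -⟩ | ⟨hx, -⟩) <;> exact hx
      have hdisj : Disjoint A B := by
        rw [Set.disjoint_left]
        rintro x ⟨-, h1⟩ ⟨-, h2⟩
        exact hl12 (h1 ▸ h2 ▸ rfl)
      have hAB : ∀ a ∈ A, ∀ b ∈ B, dotR a b = 0 := by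
        rintro a ⟨ha, hea⟩ b ⟨hb, heb⟩
        rw [dotR_comm]
        exact horth a ha hea b hb heb
      rcases hirr A B hcover hdisj hAB with h | h
      · exact Set.notMem_empty θ₁ (h ▸ (⟨hθ₁, hfθ₁⟩ : θ₁ ∈ A))
      · exact Set.notMem_empty θ₂ (h ▸ (⟨hθ₂, hfθ₂⟩ : θ₂ ∈ B))
  · -- upper bound
    rw [hncard]
    have hsum : Φ.card = ∑ l ∈ Φ.image f, (Φ.filter fun θ => f θ = l).card :=
      Finset.card_eq_sum_card_image f Φ
    have hfib : ∀ l ∈ Φ.image f, 2 ≤ (Φ.filter fun θ => f θ = l).card := by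
      intro l hl
      obtain ⟨θ, hθ, hfθ⟩ := Finset.mem_image.mp hl
      have hfneg : f (-θ) = l := by
        rw [hf]
        simp only
        rw [kerC_neg]
        exact hfθ
      have hneq : θ ≠ -θ := by
        intro h
        apply hne0 θ hθ
        funext i
        have := congrFun h i
        simp only [Pi.neg_apply] at this
        show θ i = 0
        linarith
      exact Finset.one_lt_card.mpr ⟨θ, Finset.mem_filter.mpr ⟨hθ, hfθ⟩, -θ,
        Finset.mem_filter.mpr ⟨hnegmem θ hθ, hfneg⟩, hneq⟩
    calc 2 * (Φ.image f).card = ∑ _l ∈ Φ.image f, 2 := by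
          rw [Finset.sum_const, smul_eq_mul, mul_comm]
      _ ≤ ∑ l ∈ Φ.image f, (Φ.filter fun θ => f θ = l).card := Finset.sum_le_sum hfib
      _ = Φ.card := hsum.symm

end
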